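/- arXiv:2205.09680 — 2 statements merged into one kernel-verified Lean document; each statement's English description precedes it below -/
import Mathlib

section
/- Suppose r : [0,1] → [0,1] and the responses R_j^k are independent Bernoulli with E[R_j^k] = r(S_j^k). Then E[ECE^2] ≥ Σ_{j=1}^m (S_{j+1}^1 − S_j^1)(r̃_j − S̃_j)², where r̃_j and S̃_j are the bin averages of r(S_j^k) and S_j^k respectively. -/
open MeasureTheory ProbabilityTheory

/-- Squared-bias lower bound: if `r : [0,1] → [0,1]`
and the responses `R_j^k` are independent `{0,1}`-valued with `E[R_j^k] = r(S_j^k)`,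
then `E[ECE²] ≥ Σ_j (S_{j+1}^1 − S_j^1)(r̃_j − S̃_j)²`,
where `r̃_j = (1/n_j) Σ_k r(S_j^k)` and `S̃_j = (1/n_j) Σ_k S_j^k`. -/
theorem stmt_10 {Ω : Type*} [MeasureSpace Ω] [IsProbabilityMeasure (ℙ : Measure Ω)]
    (m : ℕ) (nj : Fin m → ℕ) (hnj : ∀ j, 0 < nj j)
    (E : Fin (m + 1) → ℝ) (hE : Monotone E)
    (hE0 : ∀ j, E j ∈ Set.Icc (0 : ℝ) 1) (hElast : E (Fin.last m) = 1)
    (r : ℝ → ℝ) (hr : ∀ s ∈ Set.Icc (0 : ℝ) 1, r s ∈ Set.Icc (0 : ℝ) 1)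
    (S : (j : Fin m) → Fin (nj j) → ℝ)
    (hS : ∀ j k, S j k ∈ Set.Icc (0 : ℝ) 1)
    (R : (j : Fin m) → Fin (nj j) → Ω → ℝ)
    (hmeas : ∀ j k, Measurable (R j k))
    (hindep : iIndepFun
      (fun (p : (j : Fin m) × Fin (nj j)) => R p.1 p.2) ℙ)
    (h01 : ∀ j k ω, R j k ω = 0 ∨ R j k ω = 1)
    (hmean : ∀ j k, ∫ ω, R j k ω = r (S j k)) :
    ∑ j : Fin m, (E j.succ - E j.castSucc) *
        ((1 / (nj j : ℝ)) * ∑ k, r (S j k) - (1 / (nj j : ℝ)) * ∑ k, S j k) ^ 2 ≤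
      ∫ ω, ∑ j : Fin m, (E j.succ - E j.castSucc) *
          (∑ k, (R j k ω - S j k) / (nj j : ℝ)) ^ 2 := by
  -- abbreviate the bin averages
  set G : Fin m → Ω → ℝ := fun j ω => ∑ k, (R j k ω - S j k) / (nj j : ℝ) with hG
  have hGmeas : ∀ j, Measurable (G j) := by
    intro j
    exact Finset.measurable_sum _ fun k _ => ((hmeas j k).sub measurable_const).div_const _
  have hRbound : ∀ j k ω, |R j k ω - S j k| ≤ 1 := by
    intro j k ω
    have hs := hS j k
    rcases h01 j k ω with h | h <;> rw [h, abs_sub_le_iff] <;>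
      constructor <;> linarith [hs.1, hs.2]
  have hGbound : ∀ j ω, |G j ω| ≤ 1 := by
    intro j ω
    calc |G j ω| ≤ ∑ k, |(R j k ω - S j k) / (nj j : ℝ)| := Finset.abs_sum_le_sum_abs _ _
    _ ≤ ∑ k : Fin (nj j), 1 / (nj j : ℝ) := by
        apply Finset.sum_le_sum
        intro k _
        have hn : (0:ℝ) < nj j := by exact_mod_cast hnj j
        rw [abs_div, abs_of_nonneg hn.le]
        gcongr
        exact hRbound j k ω
    _ = 1 := by
        have hn : (nj j : ℝ) ≠ 0 := Nat.cast_ne_zero.mpr (hnj j).ne'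
        rw [Finset.sum_const, Finset.card_fin, nsmul_eq_mul, mul_one_div, div_self hn]
  have hGmem : ∀ j, MemLp (G j) 2 ℙ := by
    intro j
    apply MemLp.of_bound ((hGmeas j).aestronglyMeasurable) 1
    filter_upwards with ω
    simpa using hGbound j ω
  have hGint : ∀ j, Integrable (G j) := fun j => (hGmem j).integrable (by norm_num)
  have hGsqint : ∀ j, Integrable (fun ω => (G j ω) ^ 2) := by
    intro j
    have := (hGmem j).integrable_sq
    simpa [sq] using this
  have hRmem : ∀ j k, MemLp (R j k) 1 ℙ := by
    intro j k
    apply MemLp.of_bound (hmeas j k).aestronglyMeasurable 1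
    filter_upwards with ω
    rcases h01 j k ω with h | h <;> simp [h]
  have hRint : ∀ j k, Integrable (R j k) := fun j k =>
    memLp_one_iff_integrable.mp (hRmem j k)
  have hGmean : ∀ j, ∫ ω, G j ω =
      (1 / (nj j : ℝ)) * ∑ k, r (S j k) - (1 / (nj j : ℝ)) * ∑ k, S j k := by
    intro j
    simp only [hG]
    rw [integral_finset_sum (μ := ℙ) Finset.univ
      (f := fun (k : Fin (nj j)) (ω : Ω) => (R j k ω - S j k) / (nj j : ℝ))
      (fun k _ => ((hRint j k).sub (integrable_const _)).div_const _)]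
    have : ∀ k : Fin (nj j), ∫ ω, (R j k ω - S j k) / (nj j : ℝ) =
        (r (S j k) - S j k) / (nj j : ℝ) := by
      intro k
      rw [integral_div, integral_sub (hRint j k) (integrable_const _), hmean j k,
        integral_const]
      simp
    simp only [this]
    rw [← Finset.sum_div, Finset.sum_sub_distrib]
    ring
  -- key pointwise-in-j inequality: (E[G])² ≤ E[G²]
  have hkey : ∀ j, (∫ ω, G j ω) ^ 2 ≤ ∫ ω, (G j ω) ^ 2 := by
    intro j
    have hv := variance_nonneg (G j) ℙ
    rw [variance_eq_sub (hGmem j)] at hv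
    simp only [Pi.pow_apply] at hv
    linarith [hv]
  rw [integral_finset_sum _ (fun j _ => ((hGsqint j).const_mul _))]
  apply Finset.sum_le_sum
  intro j _
  rw [integral_const_mul]
  have hw : 0 ≤ E j.succ - E j.castSucc := by
    have := hE (Fin.castSucc_le_succ j)
    linarith
  apply mul_le_mul_of_nonneg_left _ hw
  rw [← hGmean j]
  exact hkey j
end

section
/- Suppose r : [0,1] → [0,1] is continuous with ∫_0^1 (r(s) − s)² ds > 0, and for each n the bin averages satisfy: the bins have maximal width tending to 0 as n → ∞. Then liminf over n of Σ_{j=1}^m (S_{j+1}^1 − S_j^1)(r̃_j − S̃_j)² is at least ∫_0^1 (r(s) − s)² ds > 0, where r̃_j and S̃_j are the averages of r(S_j^k) and S_j^k over bin j. -/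
open MeasureTheory Filter

private lemma avg_mem_Icc {N : ℕ} (hN : 0 < N) (x : Fin N → ℝ)
    (hx : ∀ k, x k ∈ Set.Icc (0:ℝ) 1) :
    (1 / (N:ℝ)) * ∑ k, x k ∈ Set.Icc (0:ℝ) 1 := by
  have hN' : (0:ℝ) < N := by exact_mod_cast hN
  constructor
  · exact mul_nonneg (by positivity) (Finset.sum_nonneg fun k _ => (hx k).1)
  · have hs : ∑ k, x k ≤ (N:ℝ) := by
      calc ∑ k, x k ≤ ∑ _k : Fin N, (1:ℝ) := Finset.sum_le_sum fun k _ => (hx k).2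
        _ = N := by simp
    calc (1/(N:ℝ)) * ∑ k, x k ≤ (1/(N:ℝ)) * N :=
          mul_le_mul_of_nonneg_left hs (by positivity)
      _ = 1 := by field_simp

private def cl (M : ℕ) (E : Fin (M+1) → ℝ) (i : ℕ) : ℝ :=
  E ⟨min i M, Nat.lt_succ_of_le (min_le_right i M)⟩

private lemma cl_castSucc (M : ℕ) (E : Fin (M+1) → ℝ) (j : Fin M) :
    cl M E j.val = E j.castSucc := by
  unfold cl; congr 1; apply Fin.ext; simp [Nat.min_eq_left (le_of_lt j.isLt)]

private lemma cl_succ (M : ℕ) (E : Fin (M+1) → ℝ) (j : Fin M) :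
    cl M E (j.val + 1) = E j.succ := by
  unfold cl; congr 1; apply Fin.ext; simp [Nat.min_eq_left (Nat.succ_le_of_lt j.isLt)]

private lemma cl_zero (M : ℕ) (E : Fin (M+1) → ℝ) : cl M E 0 = E 0 := by
  unfold cl; congr 1

private lemma cl_last (M : ℕ) (E : Fin (M+1) → ℝ) : cl M E M = E (Fin.last M) := by
  unfold cl; congr 1; apply Fin.ext; simp [Fin.last]

private lemma cl_mono (M : ℕ) (E : Fin (M+1) → ℝ) (hE : Monotone E) :
    Monotone (cl M E) := by
  intro i i' h
  exact hE (by simp only [Fin.mk_le_mk]; exact min_le_min h le_rfl)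

private lemma fin_sum_eq (M : ℕ) (g : Fin M → ℝ) (G : ℕ → ℝ)
    (h : ∀ j : Fin M, g j = G j.val) :
    ∑ j : Fin M, g j = ∑ i ∈ Finset.range M, G i := by
  rw [Finset.sum_congr rfl (fun j _ => h j)]
  exact Fin.sum_univ_eq_sum_range G M

private lemma telescope (M : ℕ) (E : Fin (M+1) → ℝ) :
    ∑ j : Fin M, (E j.succ - E j.castSucc) = E (Fin.last M) - E 0 := by
  rw [fin_sum_eq M _ (fun i => cl M E (i+1) - cl M E i)
    (fun j => by rw [cl_castSucc, cl_succ]),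
    Finset.sum_range_sub (cl M E) M, cl_zero, cl_last]

/-- Squared-bias Riemann-sum lower bound (used in Corollary 2.10): let
`r : [0,1] → [0,1]` be continuous with `∫_0^1 (r(s) − s)² ds > 0`. For each `n`
there are `m n` bins with edges `0 ≤ E n 0 ≤ E n 1 ≤ ... ≤ E n (m n) = 1`,
each bin `j` containing scores `S n j k ∈ [E n j, E n (j+1)]`, and the maximal
bin width (including the initial gap `E n 0 − 0`) tends to `0` as `n → ∞`. Then
the liminf over `n` of `Σ_j (E n (j+1) − E n j)·(r̃_j − S̃_j)²` is at least
`∫_0^1 (r(s) − s)² ds > 0`, where `r̃_j` and `S̃_j` are the averages of `r(S_j^k)`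
and `S_j^k` over bin `j`. -/
theorem stmt_18 (r : ℝ → ℝ) (hrcont : ContinuousOn r (Set.Icc 0 1))
    (hr01 : ∀ s ∈ Set.Icc (0 : ℝ) 1, r s ∈ Set.Icc (0 : ℝ) 1)
    (hpos : 0 < ∫ s in Set.Icc (0 : ℝ) 1, (r s - s) ^ 2)
    (m : ℕ → ℕ) (hm : ∀ n, 0 < m n)
    (nj : (n : ℕ) → Fin (m n) → ℕ) (hnj : ∀ n j, 0 < nj n j)
    (E : (n : ℕ) → Fin (m n + 1) → ℝ) (hEmono : ∀ n, Monotone (E n))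
    (hE0 : ∀ n, 0 ≤ E n 0) (hElast : ∀ n, E n (Fin.last (m n)) = 1)
    (S : (n : ℕ) → (j : Fin (m n)) → Fin (nj n j) → ℝ)
    (hS : ∀ n j k, S n j k ∈ Set.Icc (E n j.castSucc) (E n j.succ))
    (hwidth : ∀ ε > (0 : ℝ), ∀ᶠ n in atTop,
      E n 0 ≤ ε ∧ ∀ j : Fin (m n), E n j.succ - E n j.castSucc ≤ ε) :
    ∫ s in Set.Icc (0 : ℝ) 1, (r s - s) ^ 2 ≤
      atTop.liminf (fun n => ∑ j : Fin (m n), (E n j.succ - E n j.castSucc) *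
        ((1 / (nj n j : ℝ)) * ∑ k, r (S n j k) -
          (1 / (nj n j : ℝ)) * ∑ k, S n j k) ^ 2) := by
  classical
  set f : ℝ → ℝ := fun s => (r s - s)^2 with hfdef
  have hfc : ContinuousOn f (Set.Icc 0 1) := (hrcont.sub continuousOn_id).pow 2
  have hfle1 : ∀ x ∈ Set.Icc (0:ℝ) 1, f x ≤ 1 := by
    intro x hx
    obtain ⟨h1, h2⟩ := hr01 x hx
    obtain ⟨h3, h4⟩ := hx
    simp only [hfdef]
    nlinarith
  have hSmem : ∀ n j k, S n j k ∈ Set.Icc (0:ℝ) 1 := by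
    intro n j k
    obtain ⟨h1, h2⟩ := hS n j k
    refine ⟨le_trans (le_trans (hE0 n) (hEmono n (Fin.zero_le _))) h1, le_trans h2 ?_⟩
    rw [← hElast n]; exact hEmono n (Fin.le_last _)
  have hD : ∀ n (j : Fin (m n)),
      (1 / (nj n j : ℝ)) * ∑ k, r (S n j k) ∈ Set.Icc (0:ℝ) 1 ∧
      (1 / (nj n j : ℝ)) * ∑ k, S n j k ∈ Set.Icc (0:ℝ) 1 := fun n j =>
    ⟨avg_mem_Icc (hnj n j) _ (fun k => hr01 _ (hSmem n j k)),
     avg_mem_Icc (hnj n j) _ (fun k => hSmem n j k)⟩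
  set u : ℕ → ℝ := fun n => ∑ j : Fin (m n), (E n j.succ - E n j.castSucc) *
        ((1 / (nj n j : ℝ)) * ∑ k, r (S n j k) -
          (1 / (nj n j : ℝ)) * ∑ k, S n j k) ^ 2 with hudef
  have hwid : ∀ n (j : Fin (m n)), 0 ≤ E n j.succ - E n j.castSucc := fun n j =>
    sub_nonneg.2 (hEmono n (Fin.castSucc_le_succ j))
  have hE01 : ∀ n (i : Fin (m n + 1)), E n i ∈ Set.Icc (0:ℝ) 1 := by
    intro n i
    refine ⟨le_trans (hE0 n) (hEmono n (Fin.zero_le _)), ?_⟩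
    rw [← hElast n]; exact hEmono n (Fin.le_last _)
  -- upper bound on u (for coboundedness)
  have huub : ∀ n, u n ≤ 1 := by
    intro n
    have h1 : u n ≤ ∑ j : Fin (m n), (E n j.succ - E n j.castSucc) := by
      apply Finset.sum_le_sum
      intro j _
      obtain ⟨⟨a1, a2⟩, ⟨b1, b2⟩⟩ := hD n j
      have hsq : ((1 / (nj n j : ℝ)) * ∑ k, r (S n j k) -
          (1 / (nj n j : ℝ)) * ∑ k, S n j k) ^ 2 ≤ 1 := by nlinarith
      exact mul_le_of_le_one_right (hwid n j) hsq
    rw [telescope (m n) (E n), hElast n] at h1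
    linarith [hE0 n]
  -- the main eventual estimate
  have main : ∀ ε > (0:ℝ), ∀ᶠ n in atTop, (∫ s in Set.Icc (0:ℝ) 1, f s) - ε ≤ u n := by
    intro ε hε
    have hruc : UniformContinuousOn r (Set.Icc 0 1) :=
      isCompact_Icc.uniformContinuousOn_of_continuous hrcont
    rw [Metric.uniformContinuousOn_iff] at hruc
    obtain ⟨δ, hδpos, hδ⟩ := hruc (ε/8) (by positivity)
    set η := min (δ/2) (ε/8) with hηdef
    have hηpos : 0 < η := by positivity
    have hηδ : η < δ := lt_of_le_of_lt (min_le_left _ _) (by linarith)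
    have hηε : η ≤ ε/8 := min_le_right _ _
    filter_upwards [hwidth η hηpos] with n hn
    set aE : ℕ → ℝ := cl (m n) (E n) with haEdef
    have haEmono : Monotone aE := cl_mono (m n) (E n) (hEmono n)
    have haE01 : ∀ i, aE i ∈ Set.Icc (0:ℝ) 1 := fun i => hE01 n _
    have haE0 : aE 0 = E n 0 := cl_zero (m n) (E n)
    have haEM : aE (m n) = 1 := by rw [haEdef, cl_last]; exact hElast n
    have hint : ∀ a b : ℝ, a ∈ Set.Icc (0:ℝ) 1 → b ∈ Set.Icc (0:ℝ) 1 →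
        IntervalIntegrable f volume a b := by
      intro a b ha hb
      exact (hfc.mono (Set.uIcc_subset_Icc ha hb)).intervalIntegrable
    set ε' := ε/8 + η with hε'def
    have hε'0 : (0:ℝ) ≤ ε' := by positivity
    set Dfun : ℕ → ℝ := fun i => if h : i < m n then
        ((1 / (nj n ⟨i,h⟩ : ℝ)) * ∑ k, r (S n ⟨i,h⟩ k) -
          (1 / (nj n ⟨i,h⟩ : ℝ)) * ∑ k, S n ⟨i,h⟩ k) else 0 with hDfundef
    -- pointwise bound on each bin
    have key : ∀ (j : Fin (m n)) (s : ℝ), s ∈ Set.Icc (E n j.castSucc) (E n j.succ) →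
        f s ≤ ((1 / (nj n j : ℝ)) * ∑ k, r (S n j k) -
          (1 / (nj n j : ℝ)) * ∑ k, S n j k) ^ 2 + 2 * ε' := by
      intro j s hs
      have hsmem : s ∈ Set.Icc (0:ℝ) 1 :=
        ⟨le_trans (hE01 n _).1 hs.1, le_trans hs.2 (hE01 n _).2⟩
      have hNpos : (0:ℝ) < (nj n j : ℝ) := by exact_mod_cast hnj n j
      set c := r s - s with hcdef
      have hterm : ∀ k, |r (S n j k) - S n j k - c| ≤ ε' := by
        intro k
        have hk := hS n j k
        have hw := hn.2 j
        have h1 : |S n j k - s| ≤ η := by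
          rw [abs_le]
          constructor
          · linarith [hk.1, hs.2]
          · linarith [hk.2, hs.1]
        have h2 : |r (S n j k) - r s| ≤ ε/8 := by
          have hd : dist (S n j k) s < δ := by
            rw [Real.dist_eq]
            linarith [abs_le.1 h1]
          have := hδ (S n j k) (hSmem n j k) s hsmem hd
          rw [Real.dist_eq] at this
          linarith [abs_le.1 this.le, le_abs_self (r (S n j k) - r s),
            neg_abs_le (r (S n j k) - r s)]
        have h1' := abs_le.1 h1
        have h2' := abs_le.1 h2
        rw [abs_le, hcdef, hε'def]
        constructor <;> [linarith [h1'.1, h1'.2, h2'.1, h2'.2];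
          linarith [h1'.1, h1'.2, h2'.1, h2'.2]]
      set Davg := (1 / (nj n j : ℝ)) * ∑ k, r (S n j k) -
          (1 / (nj n j : ℝ)) * ∑ k, S n j k with hDavgdef
      have hrep : Davg - c = (1 / (nj n j : ℝ)) * ∑ k, (r (S n j k) - S n j k - c) := by
        rw [hDavgdef, Finset.sum_sub_distrib, Finset.sum_sub_distrib, Finset.sum_const,
          Finset.card_univ, Fintype.card_fin, nsmul_eq_mul]
        field_simp <;> ring
      have hDc : |Davg - c| ≤ ε' := by
        rw [hrep, abs_mul, abs_of_nonneg (by positivity : (0:ℝ) ≤ 1/(nj n j : ℝ))]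
        have habs : |∑ k, (r (S n j k) - S n j k - c)| ≤ (nj n j : ℝ) * ε' := by
          calc |∑ k, (r (S n j k) - S n j k - c)|
              ≤ ∑ k, |r (S n j k) - S n j k - c| := Finset.abs_sum_le_sum_abs _ _
            _ ≤ ∑ _k : Fin (nj n j), ε' := Finset.sum_le_sum fun k _ => hterm k
            _ = (nj n j : ℝ) * ε' := by
                rw [Finset.sum_const, Finset.card_univ, Fintype.card_fin, nsmul_eq_mul]
        calc (1/(nj n j : ℝ)) * |∑ k, (r (S n j k) - S n j k - c)|
            ≤ (1/(nj n j : ℝ)) * ((nj n j : ℝ) * ε') :=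
              mul_le_mul_of_nonneg_left habs (by positivity)
          _ = ε' := by field_simp
      obtain ⟨⟨a1, a2⟩, ⟨b1, b2⟩⟩ := hD n j
      have hc1 : |c| ≤ 1 := by
        obtain ⟨g1, g2⟩ := hr01 s hsmem
        obtain ⟨g3, g4⟩ := hsmem
        rw [abs_le, hcdef]
        constructor <;> linarith
      have e1 : |c - Davg| ≤ ε' := by rw [abs_sub_comm]; exact hDc
      have e2 : |c + Davg| ≤ 2 := by
        have hc' := abs_le.1 hc1
        rw [abs_le, hDavgdef]
        constructor <;> linarith
      have hprod : (c - Davg) * (c + Davg) ≤ 2 * ε' := by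
        calc (c - Davg) * (c + Davg) ≤ |(c - Davg) * (c + Davg)| := le_abs_self _
          _ = |c - Davg| * |c + Davg| := abs_mul _ _
          _ ≤ ε' * 2 := mul_le_mul e1 e2 (abs_nonneg _) hε'0
          _ = 2 * ε' := by ring
      have hfs : f s = c^2 := by rw [hfdef, hcdef]
      have hexp : c^2 = Davg^2 + (c - Davg) * (c + Davg) := by ring
      rw [hfs, hexp]
      linarith
    -- per-interval integral bound
    have hbin : ∀ i ∈ Finset.range (m n), (∫ x in aE i..aE (i+1), f x) ≤
        (aE (i+1) - aE i) * ((Dfun i)^2 + 2*ε') := by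
      intro i hi
      rw [Finset.mem_range] at hi
      have hcs : aE i = E n (Fin.castSucc ⟨i, hi⟩) := cl_castSucc (m n) (E n) ⟨i, hi⟩
      have hsc : aE (i+1) = E n (Fin.succ ⟨i, hi⟩) := cl_succ (m n) (E n) ⟨i, hi⟩
      have hab : aE i ≤ aE (i+1) := haEmono (Nat.le_succ i)
      have h1 : (∫ x in aE i..aE (i+1), f x) ≤
          ∫ _x in aE i..aE (i+1), ((Dfun i)^2 + 2*ε') := by
        apply intervalIntegral.integral_mono_on hab
          (hint _ _ (haE01 i) (haE01 (i+1))) intervalIntegrable_const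
        intro x hx
        have hkey := key ⟨i, hi⟩ x (by rw [hcs, hsc] at hx; exact hx)
        have hDi : Dfun i = (1 / (nj n ⟨i, hi⟩ : ℝ)) * ∑ k, r (S n ⟨i, hi⟩ k) -
            (1 / (nj n ⟨i, hi⟩ : ℝ)) * ∑ k, S n ⟨i, hi⟩ k := by
          rw [hDfundef]; exact dif_pos hi
        rw [hDi]
        exact hkey
      rw [intervalIntegral.integral_const, smul_eq_mul] at h1
      exact h1
    have hueq : u n = ∑ i ∈ Finset.range (m n), (aE (i+1) - aE i) * (Dfun i)^2 := by
      rw [hudef]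
      refine fin_sum_eq (m n) _ _ (fun j => ?_)
      have hDj : Dfun j.val = (1 / (nj n j : ℝ)) * ∑ k, r (S n j k) -
          (1 / (nj n j : ℝ)) * ∑ k, S n j k := by
        rw [hDfundef]
        simp only [j.isLt, dif_pos, Fin.eta]
      rw [hDj, haEdef, cl_succ, cl_castSucc]
    have hsum : (∫ x in (aE 0)..(aE (m n)), f x) ≤ u n + 2*ε' := by
      rw [← intervalIntegral.sum_integral_adjacent_intervals
        (fun i _ => hint _ _ (haE01 i) (haE01 (i+1)))]
      have hstep : ∑ i ∈ Finset.range (m n), (aE (i+1) - aE i) * ((Dfun i)^2 + 2*ε')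
          = u n + 2*ε' * (aE (m n) - aE 0) := by
        rw [hueq, ← Finset.sum_range_sub aE (m n), Finset.mul_sum,
          ← Finset.sum_add_distrib]
        apply Finset.sum_congr rfl
        intro i _
        ring
      have hlast : 2*ε' * (aE (m n) - aE 0) ≤ 2*ε' := by
        have h1 : aE (m n) - aE 0 ≤ 1 := by rw [haEM]; linarith [(haE01 0).1]
        nlinarith
      calc ∑ i ∈ Finset.range (m n), ∫ x in aE i..aE (i+1), f x
          ≤ ∑ i ∈ Finset.range (m n), (aE (i+1) - aE i) * ((Dfun i)^2 + 2*ε') :=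
            Finset.sum_le_sum hbin
        _ = u n + 2*ε' * (aE (m n) - aE 0) := hstep
        _ ≤ u n + 2*ε' := by linarith
    have h0 : (∫ x in (0:ℝ)..aE 0, f x) ≤ η := by
      have h01 : IntervalIntegrable f volume 0 (aE 0) :=
        hint _ _ (Set.left_mem_Icc.2 zero_le_one) (haE01 0)
      have hmono := intervalIntegral.integral_mono_on (haE01 0).1 h01
        (intervalIntegrable_const (c := (1:ℝ)))
        (fun x hx => hfle1 x ⟨hx.1, le_trans hx.2 (haE01 0).2⟩)
      rw [intervalIntegral.integral_const, smul_eq_mul, mul_one, sub_zero] at hmono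
      calc (∫ x in (0:ℝ)..aE 0, f x) ≤ aE 0 := hmono
        _ ≤ η := by rw [haE0]; exact hn.1
    have hsplit : (∫ s in Set.Icc (0:ℝ) 1, f s)
        = (∫ x in (0:ℝ)..aE 0, f x) + ∫ x in (aE 0)..(aE (m n)), f x := by
      rw [intervalIntegral.integral_add_adjacent_intervals
        (hint _ _ (Set.left_mem_Icc.2 zero_le_one) (haE01 0))
        (hint _ _ (haE01 0) (haE01 (m n))), haEM,
        intervalIntegral.integral_of_le zero_le_one,
        ← MeasureTheory.integral_Icc_eq_integral_Ioc]
    have hε'ε : ε' ≤ ε/4 := by rw [hε'def]; linarith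
    rw [hsplit]
    have hAB := sub_le_sub_right (add_le_add h0 hsum) ε
    refine le_trans hAB ?_
    clear_value u ε' η
    linarith
  -- conclusion
  refine le_of_forall_pos_le_add fun ε hε => ?_
  have hlb : (∫ s in Set.Icc (0:ℝ) 1, f s) - ε ≤ atTop.liminf u :=
    le_liminf_of_le (isCoboundedUnder_ge_of_eventually_le atTop
      (Eventually.of_forall huub)) (main ε hε)
  linarith
end
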